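/- arXiv:1909.02865 — 2 statements merged into one kernel-verified Lean document; each statement's English description precedes it below -/
import Mathlib

section
/- In the graph 𝒢 constructed for the connectivity lower-bound proof (with vertex copies A_L, A_U, B_L, B_U, C¹_L, C¹_U, C¹_crash, C², and the directed/undirected edge rules of the construction), every copy of a node u receives messages from at most one copy of each neighbor v of u in G; formally, for each edge uv of G and each copy u' of u, there is at most one copy v' of v such that there is an undirected edge u'v' or a directed edge from v' to u'. -/
/-- Copies of the vertices of `G` in the network 𝒢: two copies (`L` = `false`,
`U` = `true`) of each vertex of `A` and of `B`, three copies (`0` = L, `1` = U,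
`2` = crash) of each vertex of `C¹`, and one copy of each vertex of `C²`. -/
inductive Cpy {V : Type*} (A B C1 C2 : Finset V) : Type _
  | a (u : V) (hu : u ∈ A) (s : Bool)
  | b (u : V) (hu : u ∈ B) (s : Bool)
  | c1 (u : V) (hu : u ∈ C1) (s : Fin 3)
  | c2 (u : V) (hu : u ∈ C2)

/-- The original vertex a copy corresponds to. -/
def Cpy.proj {V : Type*} {A B C1 C2 : Finset V} : Cpy A B C1 C2 → V
  | .a u _ _ => u
  | .b u _ _ => u
  | .c1 u _ _ => u
  | .c2 u _ => u

/-- One orientation of the undirected edges of 𝒢: within `A`, `B`, `C¹`,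
copies of matching subscripts are joined (including crash copies for `C¹`);
within `C²` the original edges; for `u ∈ C¹, v ∈ C²` the edge `u_U v`;
for `u ∈ A ∪ B, v ∈ C¹` the edges `u_L v_L` and `u_U v_U`;
for `u ∈ A, v ∈ C²` the edge `u_L v`; for `u ∈ B, v ∈ C²` the edge `u_U v`. -/
def UEdge0 {V : Type*} (G : SimpleGraph V) {A B C1 C2 : Finset V} :
    Cpy A B C1 C2 → Cpy A B C1 C2 → Prop
  | .a u _ s, .a v _ t => G.Adj u v ∧ s = t
  | .b u _ s, .b v _ t => G.Adj u v ∧ s = t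
  | .c1 u _ s, .c1 v _ t => G.Adj u v ∧ s = t
  | .c2 u _, .c2 v _ => G.Adj u v
  | .c1 u _ s, .c2 v _ => G.Adj u v ∧ s = 1
  | .a u _ s, .c1 v _ t => G.Adj u v ∧ ((s = false ∧ t = 0) ∨ (s = true ∧ t = 1))
  | .b u _ s, .c1 v _ t => G.Adj u v ∧ ((s = false ∧ t = 0) ∨ (s = true ∧ t = 1))
  | .a u _ s, .c2 v _ => G.Adj u v ∧ s = false
  | .b u _ s, .c2 v _ => G.Adj u v ∧ s = true
  | _, _ => False

/-- The directed edges of 𝒢, `DEdge x y` meaning an edge directed from `x`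
to `y`: for `u ∈ C¹, v ∈ C²` the edge `v → u_L`; for `u ∈ A, v ∈ C²` the edge
`v → u_U`; for `u ∈ B, v ∈ C²` the edge `v → u_L`. -/
def DEdge {V : Type*} (G : SimpleGraph V) {A B C1 C2 : Finset V} :
    Cpy A B C1 C2 → Cpy A B C1 C2 → Prop
  | .c2 v _, .c1 u _ s => G.Adj v u ∧ s = 0
  | .c2 v _, .a u _ s => G.Adj v u ∧ s = true
  | .c2 v _, .b u _ s => G.Adj v u ∧ s = false
  | _, _ => False

/-- `x` receives messages from `y`: there is an undirected edge between them,
or a directed edge from `y` to `x`. -/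
def Recv {V : Type*} (G : SimpleGraph V) {A B C1 C2 : Finset V}
    (x y : Cpy A B C1 C2) : Prop :=
  UEdge0 G x y ∨ UEdge0 G y x ∨ DEdge G y x

set_option maxHeartbeats 2000000 in
/-- Every copy of a node `u` receives messages from at most one copy of each
neighbor `v` of `u` in `G`. -/
theorem stmt7 {V : Type*} [Fintype V] [DecidableEq V] (G : SimpleGraph V)
    (A B C1 C2 : Finset V)
    (hAB : Disjoint A B) (hAC1 : Disjoint A C1) (hAC2 : Disjoint A C2)
    (hBC1 : Disjoint B C1) (hBC2 : Disjoint B C2) (hC12 : Disjoint C1 C2)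
    (hpart : A ∪ B ∪ C1 ∪ C2 = Finset.univ)
    (hA : A.Nonempty) (hB : B.Nonempty)
    (hcut : ∀ a ∈ A, ∀ b ∈ B, ¬ G.Adj a b)
    (u v : V) (huv : G.Adj u v) :
    ∀ u' v1 v2 : Cpy A B C1 C2, u'.proj = u → v1.proj = v → v2.proj = v →
      Recv G u' v1 → Recv G u' v2 → v1 = v2 := by
  have dAB := Finset.disjoint_left.mp hAB
  have dAC1 := Finset.disjoint_left.mp hAC1
  have dAC2 := Finset.disjoint_left.mp hAC2
  have dBC1 := Finset.disjoint_left.mp hBC1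
  have dBC2 := Finset.disjoint_left.mp hBC2
  have dC12 := Finset.disjoint_left.mp hC12
  rintro u' v1 v2 h1 h2 h3 r1 r2
  cases u' <;> cases v1 <;> cases v2 <;>
    simp only [Recv, UEdge0, DEdge, Cpy.proj, or_false, false_or] at h1 h2 h3 r1 r2 <;>
    subst h1 <;> subst h2 <;> subst h3 <;>
    first
    | rfl
    | (exfalso; solve_by_elim)
    | (simp_all <;> omega)
    | (casesm* _ ∨ _, _ ∧ _ <;> simp_all <;> omega)
end

section
/- In the graph 𝒢 of the connectivity proof, restricting to the undirected edges only, there is no path between A_L ∪ C¹_L ∪ B_L and C¹_crash; that is, the crash copies C¹_crash form a union of connected components disjoint from all other copies. -/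
/-- The simple graph on the copies given by the undirected edges only. -/
def UGraph {V : Type*} (G : SimpleGraph V) (A B C1 C2 : Finset V) :
    SimpleGraph (Cpy A B C1 C2) :=
  SimpleGraph.fromRel (UEdge0 G)

/-- A copy is a crash copy if it is `c1 _ _ 2`. -/
def Cpy.isCrash {V : Type*} {A B C1 C2 : Finset V} : Cpy A B C1 C2 → Prop
  | .c1 _ _ s => s = 2
  | _ => False

/-- A copy lies in `A_L ∪ C¹_L ∪ B_L` if it is `a _ _ false`, `b _ _ false`,
or `c1 _ _ 0`. -/
def Cpy.isLCopy {V : Type*} {A B C1 C2 : Finset V} : Cpy A B C1 C2 → Prop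
  | .a _ _ s => s = false
  | .b _ _ s => s = false
  | .c1 _ _ s => s = 0
  | _ => False

lemma crash_adj {V : Type*} [Fintype V] [DecidableEq V] (G : SimpleGraph V)
    (A B C1 C2 : Finset V) :
    ∀ x y : Cpy A B C1 C2, x.isCrash → (UGraph G A B C1 C2).Adj x y → y.isCrash := by
  intro x y hx hadj
  obtain ⟨hne, h | h⟩ := hadj <;>
    cases x <;> cases y <;>
    simp_all [Cpy.isCrash, UEdge0] <;> omega

/-- Restricting 𝒢 to the undirected edges only, there is no path between
`A_L ∪ C¹_L ∪ B_L` and `C¹_crash`; moreover, the crash copies form a union of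
connected components disjoint from all other copies. -/
theorem stmt14 {V : Type*} [Fintype V] [DecidableEq V] (G : SimpleGraph V)
    (A B C1 C2 : Finset V)
    (hAB : Disjoint A B) (hAC1 : Disjoint A C1) (hAC2 : Disjoint A C2)
    (hBC1 : Disjoint B C1) (hBC2 : Disjoint B C2) (hC12 : Disjoint C1 C2)
    (hpart : A ∪ B ∪ C1 ∪ C2 = Finset.univ)
    (hA : A.Nonempty) (hB : B.Nonempty)
    (hcut : ∀ a ∈ A, ∀ b ∈ B, ¬ G.Adj a b) :
    (∀ x y : Cpy A B C1 C2, x.isLCopy → y.isCrash →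
        ¬ (UGraph G A B C1 C2).Reachable x y) ∧
    (∀ x y : Cpy A B C1 C2, x.isCrash →
        (UGraph G A B C1 C2).Reachable x y → y.isCrash) := by
  have key : ∀ x y : Cpy A B C1 C2, x.isCrash →
      (UGraph G A B C1 C2).Reachable x y → y.isCrash := by
    intro x y hx ⟨w⟩
    induction w with
    | nil => exact hx
    | cons h _ ih => exact ih (crash_adj G A B C1 C2 _ _ hx h)
  refine ⟨fun x y hx hy hr => ?_, key⟩
  have := key y x hy hr.symm
  cases x <;> simp_all [Cpy.isCrash, Cpy.isLCopy]
end
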